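/- Consider n particles x_1(t),...,x_n(t) on S^{d-1} evolving by ẋ_i = P^⊥_{x_i}( (1/Z_{β,i}) Σ_j e^{β⟨x_i,x_j⟩} x_j ), where Z_{β,i} = Σ_k e^{β⟨x_i,x_k⟩} and P^⊥_x y = y - ⟨x,y⟩x. If there exists w ∈ S^{d-1} with ⟨x_i(0), w⟩ > 0 for all i, then the function t ↦ min_{i∈[n]} ⟨x_i(t), w⟩ is non-decreasing on [0,∞); in particular all particles remain in the open hemisphere {x : ⟨x,w⟩ > 0} for all t ≥ 0. -/

import Mathlib

open Set Filter Topology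
open scoped RealInnerProductSpace

/-- The self-attention vector field: for a configuration `x : Fin n → ℝ^d`, the
velocity of particle `i` is the projection onto the tangent space at `x i` of the
softmax-weighted average `(1/Z_{β,i}) Σ_j e^{β⟨x i, x j⟩} x j`. -/
noncomputable def SAfield {d n : ℕ} (β : ℝ) (x : Fin n → EuclideanSpace ℝ (Fin d))
    (i : Fin n) : EuclideanSpace ℝ (Fin d) :=
  let v := (∑ k, Real.exp (β * ⟪x i, x k⟫))⁻¹ •
      ∑ j, Real.exp (β * ⟪x i, x j⟫) • x j
  v - ⟪x i, v⟫ • x i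

lemma SAfield_inner_nonneg {d n : ℕ} [NeZero n] (β : ℝ)
    (y : Fin n → EuclideanSpace ℝ (Fin d)) (hy : ∀ j, ‖y j‖ = 1)
    (w : EuclideanSpace ℝ (Fin d)) (i : Fin n) (m : ℝ) (hm : 0 ≤ m)
    (hmi : ⟪y i, w⟫ = m) (hall : ∀ j, m ≤ ⟪y j, w⟫) :
    0 ≤ ⟪SAfield β y i, w⟫ := by
  classical
  set Z : ℝ := ∑ k, Real.exp (β * ⟪y i, y k⟫) with hZdef
  have hZpos : 0 < Z := Finset.sum_pos (fun k _ => Real.exp_pos _) Finset.univ_nonempty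
  set v : EuclideanSpace ℝ (Fin d) := Z⁻¹ • ∑ j, Real.exp (β * ⟪y i, y j⟫) • y j with hvdef
  have hvw : ⟪v, w⟫ = Z⁻¹ * ∑ j, Real.exp (β * ⟪y i, y j⟫) * ⟪y j, w⟫ := by
    rw [hvdef, real_inner_smul_left, sum_inner]
    congr 1
    exact Finset.sum_congr rfl fun j _ => real_inner_smul_left _ _ _
  have hvw_ge : m ≤ ⟪v, w⟫ := by
    rw [hvw]
    have h1 : Z * m ≤ ∑ j, Real.exp (β * ⟪y i, y j⟫) * ⟪y j, w⟫ := by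
      rw [hZdef, Finset.sum_mul]
      exact Finset.sum_le_sum fun j _ =>
        mul_le_mul_of_nonneg_left (hall j) (Real.exp_pos _).le
    calc m = Z⁻¹ * (Z * m) := by field_simp
    _ ≤ Z⁻¹ * ∑ j, Real.exp (β * ⟪y i, y j⟫) * ⟪y j, w⟫ :=
        mul_le_mul_of_nonneg_left h1 (inv_nonneg.2 hZpos.le)
  have hvnorm : ‖v‖ ≤ 1 := by
    rw [hvdef, norm_smul]
    have : ‖∑ j, Real.exp (β * ⟪y i, y j⟫) • y j‖ ≤ Z := by
      refine (norm_sum_le _ _).trans ?_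
      rw [hZdef]
      refine le_of_eq (Finset.sum_congr rfl fun j _ => ?_)
      rw [norm_smul, hy j, mul_one, Real.norm_eq_abs, abs_of_pos (Real.exp_pos _)]
    calc ‖(Z⁻¹ : ℝ)‖ * ‖∑ j, Real.exp (β * ⟪y i, y j⟫) • y j‖
        ≤ ‖(Z⁻¹ : ℝ)‖ * Z := mul_le_mul_of_nonneg_left this (norm_nonneg _)
      _ = 1 := by rw [Real.norm_eq_abs, abs_of_pos (inv_pos.2 hZpos)]; field_simp
  have hiv : ⟪y i, v⟫ ≤ 1 := by
    calc ⟪y i, v⟫ ≤ ‖y i‖ * ‖v‖ := real_inner_le_norm _ _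
      _ ≤ 1 := by rw [hy i, one_mul]; exact hvnorm
  have hSA0 : SAfield β y i = v - ⟪y i, v⟫ • y i := rfl
  have hSA : ⟪SAfield β y i, w⟫ = ⟪v, w⟫ - ⟪y i, v⟫ * m := by
    have h2 : ⟪(⟪y i, v⟫ : ℝ) • y i, w⟫ = ⟪y i, v⟫ * m := by
      rw [real_inner_smul_left, hmi]
    rw [hSA0, inner_sub_left, h2]
  rw [hSA]
  have : ⟪y i, v⟫ * m ≤ 1 * m := mul_le_mul_of_nonneg_right hiv hm
  nlinarith [hvw_ge]

/-- Cone preservation for the self-attention dynamics: if all particles start in the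
open hemisphere `{⟨·,w⟩ > 0}`, then `t ↦ min_i ⟨x_i(t), w⟩` is non-decreasing on
`[0,∞)`; in particular all particles remain in the open hemisphere for all `t ≥ 0`. -/
theorem stmt_5 {d n : ℕ} (hn : 0 < n) (β : ℝ) (hβ : 0 < β)
    (x : Fin n → ℝ → EuclideanSpace ℝ (Fin d))
    (hsphere : ∀ i t, x i t ∈ Metric.sphere (0 : EuclideanSpace ℝ (Fin d)) 1)
    (hode : ∀ i, ∀ t ∈ Ici (0:ℝ),
      HasDerivAt (x i) (SAfield β (fun j => x j t) i) t)
    (w : EuclideanSpace ℝ (Fin d))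
    (hw : w ∈ Metric.sphere (0 : EuclideanSpace ℝ (Fin d)) 1)
    (hinit : ∀ i, 0 < ⟪x i 0, w⟫) :
    MonotoneOn (fun t => ⨅ i, ⟪x i t, w⟫) (Ici (0:ℝ)) ∧
      ∀ t ∈ Ici (0:ℝ), ∀ i, 0 < ⟪x i t, w⟫ := by
  classical
  haveI : NeZero n := ⟨hn.ne'⟩
  haveI : Nonempty (Fin n) := Fin.pos_iff_nonempty.mp hn
  set h : Fin n → ℝ → ℝ := fun i t => ⟪x i t, w⟫ with hhdef
  have hne : (Finset.univ : Finset (Fin n)).Nonempty := Finset.univ_nonempty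
  set F : ℝ → ℝ := fun t => Finset.univ.inf' hne fun i => h i t with hFdef
  have hFinf : ∀ t, (⨅ i, ⟪x i t, w⟫) = F t := fun t =>
    (Finset.inf'_univ_eq_ciInf _).symm
  have hunit : ∀ i t, ‖x i t‖ = 1 := fun i t =>
    mem_sphere_zero_iff_norm.mp (hsphere i t)
  set D : Fin n → ℝ → ℝ := fun i t => ⟪SAfield β (fun j => x j t) i, w⟫ with hDdef
  have hD : ∀ i, ∀ t ∈ Ici (0:ℝ), HasDerivAt (h i) (D i t) t := by
    intro i t ht
    have := (hode i t ht).inner ℝ (hasDerivAt_const t w)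
    simpa using this
  have hcont : ∀ i t, (0:ℝ) ≤ t → ContinuousAt (h i) t := fun i t ht =>
    (hD i t ht).continuousAt
  have hFcont : ∀ t, (0:ℝ) ≤ t → ContinuousAt F t := fun t ht =>
    ContinuousAt.finset_inf'_apply hne fun i _ => hcont i t ht
  have hFle : ∀ t i, F t ≤ h i t := fun t i =>
    Finset.inf'_le _ (Finset.mem_univ i)
  -- the argmin set
  set A : ℝ → Finset (Fin n) := fun z => Finset.univ.filter fun j => h j z = F z
    with hAdef
  have hA : ∀ z, (A z).Nonempty := by
    intro z
    obtain ⟨i, -, hi⟩ := Finset.exists_mem_eq_inf' hne fun i => h i z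
    exact ⟨i, Finset.mem_filter.mpr ⟨Finset.mem_univ i, hi.symm⟩⟩
  have hAmem : ∀ z k, k ∈ A z → h k z = F z := fun z k hk =>
    (Finset.mem_filter.mp hk).2
  -- nonneg derivative at argmin points with nonneg min value
  have hDnonneg : ∀ z k, k ∈ A z → 0 ≤ F z → 0 ≤ D k z := by
    intro z k hk hFz
    exact SAfield_inner_nonneg β (fun j => x j z) (fun j => hunit j z) w k (F z)
      hFz (hAmem z k hk) (fun j => hFle z j)
  -- main comparison claim
  have main : ∀ a, 0 ≤ a → 0 < F a → ∀ t, a ≤ t → F a ≤ F t := by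
    intro a ha hFa t hat
    rcases eq_or_lt_of_le hat with rfl | hlt
    · exact le_rfl
    have htpos : 0 < t - a := sub_pos.mpr hlt
    have Hε : ∀ ε : ℝ, 0 < ε → ε * (t - a) < F a → F a - ε * (t - a) ≤ F t := by
      intro ε hε hεsmall
      set f' : ℝ → ℝ := fun z => -((A z).inf' (hA z) fun k => D k z) with hf'def
      have key := image_le_of_liminf_slope_right_lt_deriv_boundary'
        (f := fun z => -F z) (f' := f') (a := a) (b := t)
        (B := fun z => -F a + ε * (z - a)) (B' := fun _ => ε)
        ?hf ?hf' ?ha ?hB ?hB' ?bound (right_mem_Icc.mpr hat)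
      · linarith [key]
      case hf =>
        intro z hz
        exact ((hFcont z (ha.trans hz.1)).continuousWithinAt).neg
      case ha => simp
      case hB =>
        exact (continuous_const.add (continuous_const.mul
          (continuous_id.sub continuous_const))).continuousOn
      case hB' =>
        intro z hz
        simpa using (((hasDerivWithinAt_id z (Ici z)).sub_const a).const_mul
          ε).const_add (-F a)
      case bound =>
        intro z hz hfz
        have hz0 : (0:ℝ) ≤ z := ha.trans hz.1
        have hFz : F z = F a - ε * (z - a) := by linarith
        have hFzpos : 0 < F z := by
          have : ε * (z - a) ≤ ε * (t - a) :=
            mul_le_mul_of_nonneg_left (by linarith [hz.2.le]) hε.le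
          linarith
        have hinf : 0 ≤ (A z).inf' (hA z) fun k => D k z :=
          (Finset.le_inf'_iff (hA z) fun k => D k z).mpr
            fun k hk => hDnonneg z k hk hFzpos.le
        simp only [hf'def]
        linarith
      case hf' =>
        intro z hz r hr
        have hz0 : (0:ℝ) ≤ z := ha.trans hz.1
        have hkD : ∀ k ∈ A z, -r < D k z := by
          intro k hk
          have h1 : ((A z).inf' (hA z) fun k => D k z) ≤ D k z :=
            Finset.inf'_le _ hk
          simp only [hf'def] at hr
          linarith
        -- E1 : slopes of argmin coordinates are eventually > -r
        have E1 : ∀ᶠ u in 𝓝[>] z, ∀ k ∈ A z, h k z - r * (u - z) < h k u := by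
          rw [Filter.eventually_all_finset]
          intro k hk
          have hslope : Filter.Tendsto (slope (h k) z) (𝓝[≠] z) (𝓝 (D k z)) :=
            hasDerivAt_iff_tendsto_slope.mp (hD k z hz0)
          have hmono : 𝓝[>] z ≤ 𝓝[≠] z :=
            nhdsWithin_mono z fun u hu => ne_of_gt hu
          have hev : ∀ᶠ u in 𝓝[>] z, -r < slope (h k) z u :=
            (hslope.mono_left hmono).eventually (eventually_gt_nhds (hkD k hk))
          filter_upwards [hev, self_mem_nhdsWithin] with u hu hu'
          have huz : 0 < u - z := sub_pos.mpr hu'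
          rw [slope_def_field] at hu
          have := (lt_div_iff₀ huz).mp hu
          linarith [this]
        -- E2 : eventually every coordinate dominates some argmin coordinate
        have E2 : ∀ᶠ u in 𝓝[>] z, ∀ j, ∃ k ∈ A z, h k u ≤ h j u := by
          rw [Filter.eventually_all]
          intro j
          by_cases hj : j ∈ A z
          · exact Filter.Eventually.of_forall fun u => ⟨j, hj, le_rfl⟩
          · obtain ⟨k0, hk0⟩ := hA z
            have hjz : F z < h j z := by
              rcases lt_or_eq_of_le (hFle z j) with h' | h'
              · exact h'
              · exact absurd (Finset.mem_filter.mpr ⟨Finset.mem_univ j, h'.symm⟩) hj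
            have ht1 : Filter.Tendsto (h k0) (𝓝[>] z) (𝓝 (F z)) := by
              rw [← hAmem z k0 hk0]
              exact ((hcont k0 z hz0).continuousWithinAt).tendsto
            have ht2 : Filter.Tendsto (h j) (𝓝[>] z) (𝓝 (h j z)) :=
              ((hcont j z hz0).continuousWithinAt).tendsto
            filter_upwards [ht1.eventually_lt ht2 hjz] with u hu
            exact ⟨k0, hk0, hu.le⟩
        have Ev : ∀ᶠ u in 𝓝[>] z, slope (fun u => -F u) z u < r := by
          filter_upwards [E1, E2, self_mem_nhdsWithin] with u hu1 hu2 hu3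
          have huz : 0 < u - z := sub_pos.mpr hu3
          obtain ⟨j, -, hj⟩ := Finset.exists_mem_eq_inf' hne fun i => h i u
          obtain ⟨k, hk, hkj⟩ := hu2 j
          have hFu : h k u ≤ F u := hkj.trans hj.symm.le
          have hkz : h k z = F z := hAmem z k hk
          have h1 : h k z - r * (u - z) < h k u := hu1 k hk
          have : F z - F u < r * (u - z) := by
            calc F z - F u ≤ F z - h k u := by linarith
            _ = h k z - h k u := by rw [hkz]
            _ < r * (u - z) := by linarith
          rw [slope_def_field]
          rw [div_lt_iff₀ huz]
          linarith
        exact Ev.frequently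
    -- pass to the limit ε → 0
    by_contra hcon
    push_neg at hcon
    set ε : ℝ := min ((F a - F t) / (2 * (t - a))) (F a / (2 * (t - a))) with hεdef
    have hε1 : 0 < ε := lt_min (div_pos (by linarith) (by linarith)) (div_pos (by linarith) (by linarith))
    have e1 : ε * (t - a) ≤ (F a - F t) / 2 := by
      calc ε * (t - a) ≤ ((F a - F t) / (2 * (t - a))) * (t - a) :=
            mul_le_mul_of_nonneg_right (min_le_left _ _) htpos.le
        _ = (F a - F t) / 2 := by field_simp
    have e2 : ε * (t - a) ≤ F a / 2 := by
      calc ε * (t - a) ≤ (F a / (2 * (t - a))) * (t - a) :=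
            mul_le_mul_of_nonneg_right (min_le_right _ _) htpos.le
        _ = F a / 2 := by field_simp
    have := Hε ε hε1 (by linarith)
    linarith
  -- assemble
  have hF0 : 0 < F 0 := (Finset.lt_inf'_iff hne).mpr fun i _ => hinit i
  have hFpos : ∀ t, 0 ≤ t → 0 < F t := fun t ht =>
    lt_of_lt_of_le hF0 (main 0 le_rfl hF0 t ht)
  constructor
  · intro s hs t ht hst
    show (⨅ i, ⟪x i s, w⟫) ≤ ⨅ i, ⟪x i t, w⟫
    rw [hFinf, hFinf]
    exact main s hs (hFpos s hs) t hst
  · intro t ht i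
    exact lt_of_lt_of_le (hFpos t ht) (hFle t i)
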